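/- For odd k ≥ 3, the k×k binary matrix M with entries M_{ij} = 1 - δ_{ij} (all ones except zeros on the diagonal) satisfies M = M² = M*, has only even columns, and is not the Gram matrix of any binary Parseval frame. -/

import Mathlib

open Matrix

lemma zmod2_sq (x : ZMod 2) : x * x = x := by revert x; decide

lemma cast_even (n : ℕ) (h : n % 2 = 0) : (n : ZMod 2) = 0 := by
  rw [← Nat.mod_add_div n 2, h]
  push_cast
  rw [show ((2:ZMod 2)) = 0 from rfl]
  ring

lemma cast_odd (n : ℕ) (h : n % 2 = 1) : (n : ZMod 2) = 1 := by
  rw [← Nat.mod_add_div n 2, h]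
  push_cast
  rw [show ((2:ZMod 2)) = 0 from rfl]
  ring

lemma sum_ite_zero_one {k : ℕ} (P : Fin k → Prop) [DecidablePred P] :
    ∑ l : Fin k, (if P l then (0:ZMod 2) else 1) =
      ((Finset.univ.filter fun l => ¬ P l).card : ZMod 2) := by
  rw [← Finset.sum_boole]
  simp [ite_not]

theorem ones_minus_identity_not_gram (k : ℕ) (hk : 3 ≤ k) (hodd : Odd k)
    (M : Matrix (Fin k) (Fin k) (ZMod 2))
    (hM : ∀ i j : Fin k, M i j = if i = j then 0 else 1) :
    M = M * M ∧ M = Mᵀ ∧ (∀ j : Fin k, (∑ i : Fin k, M i j) = 0) ∧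
      ¬ ∃ (n : ℕ) (Θ : Matrix (Fin k) (Fin n) (ZMod 2)),
          Θᵀ * Θ = 1 ∧ M = Θ * Θᵀ := by
  have hk2 : k % 2 = 1 := Nat.odd_iff.mp hodd
  refine ⟨?_, ?_, ?_, ?_⟩
  · ext i j
    rw [Matrix.mul_apply]
    have hterm : ∀ l, M i l * M l j = if l = i ∨ l = j then (0:ZMod 2) else 1 := by
      intro l
      rw [hM, hM]
      by_cases h1 : l = i
      · subst h1; simp
      · by_cases h2 : l = j
        · subst h2; simp [h1]
        · rw [if_neg (fun h => h1 h.symm), if_neg h2, if_neg (by tauto)]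
          norm_num
    rw [Finset.sum_congr rfl fun l _ => hterm l, sum_ite_zero_one]
    have hfilt : (Finset.univ.filter fun l : Fin k => ¬ (l = i ∨ l = j)) =
        Finset.univ \ {i, j} := by
      ext l; simp
    rw [hfilt, Finset.card_sdiff_of_subset (by simp)]
    by_cases hij : i = j
    · have : ({i, j} : Finset (Fin k)).card = 1 := by simp [hij]
      rw [this, hM, if_pos hij]
      simp only [Finset.card_univ, Fintype.card_fin]
      exact (cast_even _ (by omega)).symm
    · have : ({i, j} : Finset (Fin k)).card = 2 := by
        rw [Finset.card_insert_of_notMem (by simp [hij]), Finset.card_singleton]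
      rw [this, hM, if_neg hij]
      simp only [Finset.card_univ, Fintype.card_fin]
      exact (cast_odd _ (by omega)).symm
  · ext i j
    rw [Matrix.transpose_apply, hM, hM]
    simp [eq_comm]
  · intro j
    have : ∀ i, M i j = if i = j then (0:ZMod 2) else 1 := fun i => hM i j
    rw [Finset.sum_congr rfl fun i _ => this i, sum_ite_zero_one]
    have hfilt : (Finset.univ.filter fun i : Fin k => ¬ (i = j)) =
        Finset.univ \ {j} := by ext l; simp
    rw [hfilt, Finset.card_sdiff_of_subset (by simp)]
    simp only [Finset.card_univ, Fintype.card_fin, Finset.card_singleton]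
    exact cast_even _ (by omega)
  · rintro ⟨n, Θ, hΘ1, hΘ2⟩
    -- each row of Θ has even weight
    have hrow : ∀ i : Fin k, ∑ j : Fin n, Θ i j = 0 := by
      intro i
      have h1 : M i i = 0 := by rw [hM]; simp
      have h2 : M i i = ∑ j : Fin n, Θ i j := by
        rw [hΘ2, Matrix.mul_apply]
        exact Finset.sum_congr rfl fun j _ => by
          rw [Matrix.transpose_apply, zmod2_sq]
      rw [← h2, h1]
    rcases Nat.eq_zero_or_pos n with hn | hn
    · subst hn
      have h01 : (⟨0, by omega⟩ : Fin k) ≠ ⟨1, by omega⟩ := by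
        simp [Fin.ext_iff]
      have h1 : M ⟨0, by omega⟩ ⟨1, by omega⟩ = 1 := by rw [hM, if_neg h01]
      have h2 : M ⟨0, by omega⟩ ⟨1, by omega⟩ = 0 := by
        rw [hΘ2, Matrix.mul_apply]; simp
      rw [h1] at h2; exact one_ne_zero h2
    · set j0 : Fin n := ⟨0, hn⟩
      have key : ∑ j : Fin n, (Θᵀ * Θ) j0 j = 0 := by
        have : ∀ j, (Θᵀ * Θ) j0 j = ∑ i : Fin k, Θ i j0 * Θ i j := by
          intro j; rw [Matrix.mul_apply]; rfl
        rw [Finset.sum_congr rfl fun j _ => this j, Finset.sum_comm]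
        rw [Finset.sum_congr rfl fun i _ => (Finset.mul_sum Finset.univ (fun x => Θ i x) (Θ i j0)).symm]
        rw [Finset.sum_congr rfl fun i (_ : i ∈ Finset.univ) => by rw [hrow i, mul_zero]]
        simp
      rw [hΘ1] at key
      simp [Matrix.one_apply] at key
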